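/- Let f be a trigonometric polynomial of degree d and let N be a positive integer with N ≥ 8πd. Then (1/N) ∑_{m=1}^N |f((m−1)/N)| ≥ (1/2) ‖f‖_{L^1([0,1])}. -/

import Mathlib

open MeasureTheory Complex Finset intervalIntegral

/-- `e z = e^{2πiz}`. -/
noncomputable def e (x : ℝ) : ℂ := Complex.exp (2 * Real.pi * Complex.I * x)

lemma e_add (x y : ℝ) : e (x + y) = e x * e y := by
  unfold e; rw [← Complex.exp_add]; push_cast; ring_nf

lemma e_zero : e 0 = 1 := by simp [e]

lemma e_int (k : ℤ) : e k = 1 := by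
  unfold e
  have := Complex.exp_int_mul_two_pi_mul_I k
  rw [← this]; congr 1; push_cast; ring

lemma norm_e (x : ℝ) : ‖e x‖ = 1 := by
  unfold e
  rw [show (2 * (Real.pi:ℂ) * Complex.I * x) = ((2 * Real.pi * x : ℝ) : ℂ) * Complex.I by push_cast; ring]
  exact Complex.norm_exp_ofReal_mul_I _

lemma conj_e (x : ℝ) : (starRingEnd ℂ) (e x) = e (-x) := by
  unfold e
  rw [← Complex.exp_conj]
  congr 1
  rw [show (2*(Real.pi:ℂ)*Complex.I*x) = ((2*Real.pi*x:ℝ):ℂ)*Complex.I by push_cast; ring,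
    map_mul, Complex.conj_ofReal, Complex.conj_I]
  push_cast; ring

lemma continuous_e (c : ℝ) : Continuous (fun t : ℝ => e (c * t)) := by
  unfold e; fun_prop

lemma integral_e (k : ℤ) : (∫ s in (0:ℝ)..1, e (k * s)) = if k = 0 then 1 else 0 := by
  by_cases hk : k = 0
  · simp [hk, e_zero]
  · have hc : (2 * (Real.pi:ℂ) * Complex.I * k) ≠ 0 := by
      simp [Complex.ext_iff, Real.pi_ne_zero, hk]
    have := integral_exp_mul_complex (a := 0) (b := 1) hc
    rw [show (∫ s in (0:ℝ)..1, e (k * s))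
      = ∫ s in (0:ℝ)..1, Complex.exp ((2 * Real.pi * Complex.I * k) * s) by
        apply intervalIntegral.integral_congr; intro s _; unfold e; push_cast; ring_nf]
    rw [this]
    simp [hk, Complex.exp_int_mul_two_pi_mul_I]
    rw [show (2 * (Real.pi:ℂ) * Complex.I * k) = k * (2 * Real.pi * Complex.I) by ring]
    simp [Complex.exp_int_mul_two_pi_mul_I]

lemma sum_range_int (m : ℕ) (h : ℤ → ℂ) :
    ∑ j ∈ Finset.range m, h (j : ℤ) = ∑ j ∈ Finset.Ico (0:ℤ) (m:ℤ), h j := by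
  rw [show Finset.Ico (0:ℤ) (m:ℤ)
    = (Finset.range ((m:ℤ) - 0).toNat).map (Nat.castEmbedding.trans (addLeftEmbedding 0)) from rfl]
  rw [Finset.sum_map]
  simp [Nat.castEmbedding]

lemma aux_count (m : ℕ) (k : ℤ) :
    (∑ j ∈ Finset.range m, ∑ j' ∈ Finset.range m,
      if ((j:ℤ) - (j':ℤ) = k) then (1:ℂ) else 0) = (((m:ℤ) - |k|).toNat : ℂ) := by
  have inner : ∀ j : ℤ, (∑ j' ∈ Finset.range m, if (j - (j':ℤ) = k) then (1:ℂ) else 0)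
      = if j - k ∈ Finset.Ico (0:ℤ) (m:ℤ) then 1 else 0 := by
    intro j
    rw [sum_range_int m (fun j' => if (j - j' = k) then (1:ℂ) else 0)]
    rw [show (∑ j' ∈ Finset.Ico (0:ℤ) (m:ℤ), if (j - j' = k) then (1:ℂ) else 0)
      = ∑ j' ∈ Finset.Ico (0:ℤ) (m:ℤ), if (j' = j - k) then (1:ℂ) else 0 by
        apply Finset.sum_congr rfl; intro x _; apply if_congr (by omega) rfl rfl]
    rw [Finset.sum_ite_eq' (Finset.Ico (0:ℤ) (m:ℤ)) (j - k) (fun _ => (1:ℂ))]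
  calc (∑ j ∈ Finset.range m, ∑ j' ∈ Finset.range m,
      if ((j:ℤ) - (j':ℤ) = k) then (1:ℂ) else 0)
      = ∑ j ∈ Finset.Ico (0:ℤ) (m:ℤ), if j - k ∈ Finset.Ico (0:ℤ) (m:ℤ) then (1:ℂ) else 0 := by
        rw [← sum_range_int m (fun j => if j - k ∈ Finset.Ico (0:ℤ) (m:ℤ) then (1:ℂ) else 0)]
        exact Finset.sum_congr rfl (fun j _ => inner j)
    _ = ∑ j ∈ Finset.Ico (0:ℤ) (m:ℤ), if j ∈ Finset.Ico k (m+k) then (1:ℂ) else 0 := by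
        apply Finset.sum_congr rfl; intro x _
        apply if_congr _ rfl rfl
        simp only [Finset.mem_Ico]; omega
    _ = ∑ j ∈ Finset.Ico (0:ℤ) (m:ℤ) ∩ Finset.Ico k (m+k), (1:ℂ) := by
        rw [Finset.sum_ite_mem]
    _ = (((m:ℤ) - |k|).toNat : ℂ) := by
        rw [Finset.sum_const, Finset.Ico_inter_Ico, Int.card_Ico]
        have : (min (m:ℤ) (m + k) - max 0 k).toNat = ((m:ℤ) - |k|).toNat := by
          rcases abs_cases k with ⟨h1,h2⟩ | ⟨h1,h2⟩ <;> omega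
        rw [this]; simp

/-! ### The kernel -/

noncomputable def P (d : ℕ) (u : ℝ) : ℂ := ∑ j ∈ Finset.range (2*d), e ((j:ℝ) * u)

noncomputable def Q (d : ℕ) (u : ℝ) : ℂ :=
  ∑ j ∈ Finset.range (2*d), ∑ j' ∈ Finset.range (2*d), e ((((j:ℤ) - (j':ℤ)) : ℝ) * u)

noncomputable def K (d : ℕ) (u : ℝ) : ℂ :=
  (Real.pi * Complex.I) * (e ((d:ℝ)*u) - e ((-(d:ℝ))*u)) * Q d u

lemma continuous_Q (d : ℕ) : Continuous (Q d) :=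
  continuous_finset_sum _ (fun _ _ => continuous_finset_sum _ (fun _ _ => continuous_e _))

lemma continuous_K (d : ℕ) : Continuous (K d) :=
  (continuous_const.mul ((continuous_e (d:ℝ)).sub (continuous_e (-(d:ℝ))))).mul (continuous_Q d)

lemma Q_eq (d : ℕ) (u : ℝ) : Q d u = ((‖P d u‖^2 : ℝ) : ℂ) := by
  have h1 : Q d u = P d u * (starRingEnd ℂ) (P d u) := by
    unfold P Q
    rw [map_sum, Finset.sum_mul_sum]
    apply Finset.sum_congr rfl; intro j _
    apply Finset.sum_congr rfl; intro j' _
    rw [conj_e, ← e_add]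
    congr 1; push_cast; ring
  rw [h1, Complex.mul_conj]
  rw [Complex.normSq_eq_norm_sq]

lemma integral_Q (d : ℕ) : (∫ u in (0:ℝ)..1, Q d u) = (2*d : ℕ) := by
  unfold Q
  rw [intervalIntegral.integral_finset_sum (fun j _ =>
    ((continuous_finset_sum _ (fun _ _ => continuous_e _)).intervalIntegrable 0 1))]
  rw [show (∑ j ∈ Finset.range (2*d), ∫ u in (0:ℝ)..1,
        ∑ j' ∈ Finset.range (2*d), e ((((j:ℤ) - (j':ℤ)) : ℝ) * u))
    = ∑ j ∈ Finset.range (2*d), ∑ j' ∈ Finset.range (2*d),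
        ∫ u in (0:ℝ)..1, e ((((j:ℤ) - (j':ℤ)) : ℝ) * u) by
      apply Finset.sum_congr rfl; intro j _
      exact intervalIntegral.integral_finset_sum (fun j' _ => (continuous_e _).intervalIntegrable 0 1)]
  rw [show (∑ j ∈ Finset.range (2*d), ∑ j' ∈ Finset.range (2*d),
        ∫ u in (0:ℝ)..1, e ((((j:ℤ) - (j':ℤ)) : ℝ) * u))
    = ∑ j ∈ Finset.range (2*d), ∑ j' ∈ Finset.range (2*d),
        if ((j:ℤ) - (j':ℤ) = 0) then (1:ℂ) else 0 by
      apply Finset.sum_congr rfl; intro j _; apply Finset.sum_congr rfl; intro j' _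
      rw [show ((((j:ℤ) - (j':ℤ)) : ℝ)) = (((j:ℤ) - (j':ℤ) : ℤ) : ℝ) by push_cast; ring]
      exact integral_e _]
  rw [aux_count (2*d) 0]
  have h2 : ((((2*d:ℕ)):ℤ) - |(0:ℤ)|).toNat = 2*d := by simp; omega
  rw [h2]

lemma continuous_P (d : ℕ) : Continuous (P d) :=
  continuous_finset_sum _ (fun _ _ => continuous_e _)

lemma norm_K_le (d : ℕ) (u : ℝ) : ‖K d u‖ ≤ 2*Real.pi*‖P d u‖^2 := by
  unfold K
  rw [norm_mul, norm_mul]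
  have h1 : ‖((Real.pi:ℂ) * Complex.I)‖ = Real.pi := by
    rw [norm_mul, Complex.norm_I, mul_one, Complex.norm_real, Real.norm_eq_abs,
      _root_.abs_of_nonneg Real.pi_pos.le]
  have h2 : ‖e ((d:ℝ)*u) - e ((-(d:ℝ))*u)‖ ≤ 2 := by
    refine le_trans (norm_sub_le _ _) ?_
    rw [norm_e, norm_e]; norm_num
  have h3 : ‖Q d u‖ = ‖P d u‖^2 := by
    rw [Q_eq, Complex.norm_real, Real.norm_eq_abs]
    exact _root_.abs_of_nonneg (sq_nonneg _)
  rw [h1, h3]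
  calc Real.pi * ‖e ((d:ℝ)*u) - e ((-(d:ℝ))*u)‖ * ‖P d u‖^2
      ≤ Real.pi * 2 * ‖P d u‖^2 :=
        mul_le_mul_of_nonneg_right (mul_le_mul_of_nonneg_left h2 Real.pi_pos.le) (sq_nonneg _)
    _ = 2*Real.pi*‖P d u‖^2 := by ring

lemma integral_norm_P_sq (d : ℕ) : (∫ u in (0:ℝ)..1, ‖P d u‖^2) = 2*d := by
  have h1 : (∫ u in (0:ℝ)..1, Q d u) = (((∫ u in (0:ℝ)..1, ‖P d u‖^2) : ℝ) : ℂ) := by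
    rw [← intervalIntegral.integral_ofReal]
    exact intervalIntegral.integral_congr (fun u _ => Q_eq d u)
  rw [integral_Q] at h1
  exact_mod_cast h1.symm

lemma integral_norm_K (d : ℕ) : (∫ u in (0:ℝ)..1, ‖K d u‖) ≤ 4*Real.pi*d := by
  have mono : (∫ u in (0:ℝ)..1, ‖K d u‖) ≤ ∫ u in (0:ℝ)..1, 2*Real.pi*‖P d u‖^2 := by
    apply intervalIntegral.integral_mono_on (by norm_num)
      ((continuous_K d).norm.intervalIntegrable 0 1)
      ((continuous_const.mul ((continuous_P d).norm.pow 2)).intervalIntegrable 0 1)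
      (fun u _ => norm_K_le d u)
  refine le_trans mono ?_
  rw [intervalIntegral.integral_const_mul, integral_norm_P_sq]
  apply le_of_eq
  ring

lemma e_per (k : ℤ) (u : ℝ) : e ((k:ℝ) * (u+1)) = e ((k:ℝ)*u) := by
  rw [mul_add, mul_one, e_add, e_int, mul_one]

lemma K_periodic (d : ℕ) : Function.Periodic (K d) 1 := by
  intro u
  have hQ : Q d (u+1) = Q d u := by
    unfold Q
    apply Finset.sum_congr rfl
    intro j _
    apply Finset.sum_congr rfl
    intro j' _
    have h := e_per ((j:ℤ) - (j':ℤ)) u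
    push_cast at h ⊢
    exact h
  have h1 : e ((d:ℝ)*(u+1)) = e ((d:ℝ)*u) := by
    have h := e_per (d:ℤ) u; push_cast at h; exact h
  have h2 : e ((-(d:ℝ))*(u+1)) = e ((-(d:ℝ))*u) := by
    have h := e_per (-(d:ℤ)) u; push_cast at h; exact h
  unfold K
  rw [hQ, h1, h2]

lemma delta_int (n m : ℤ) (t : ℝ) :
    (∫ s in (0:ℝ)..1, e ((m:ℝ)*(t-s)) * e ((n:ℝ)*s))
      = (if n = m then (1:ℂ) else 0) * e ((n:ℝ)*t) := by
  have hpt : ∀ s ∈ Set.uIcc (0:ℝ) 1, e ((m:ℝ)*(t-s)) * e ((n:ℝ)*s)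
      = e ((m:ℝ)*t) * e (((n-m : ℤ):ℝ)*s) := by
    intro s _; rw [← e_add, ← e_add]; congr 1; push_cast; ring
  rw [intervalIntegral.integral_congr hpt, intervalIntegral.integral_const_mul, integral_e]
  by_cases h : n = m
  · subst h; simp
  · have h2 : n - m ≠ 0 := by omega
    simp [h, h2]

lemma continuous_shift (c t : ℝ) : Continuous (fun s : ℝ => e (c*(t-s))) := by
  unfold e; fun_prop

lemma key (d : ℕ) (n : ℤ) (hn1 : -(d:ℤ) ≤ n) (hn2 : n ≤ (d:ℤ)) (t : ℝ) :
    (∫ s in (0:ℝ)..1, e ((n:ℝ)*s) * K d (t - s))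
      = (2*Real.pi*Complex.I*n) * e ((n:ℝ)*t) := by
  have hpt : ∀ s ∈ Set.uIcc (0:ℝ) 1, e ((n:ℝ)*s) * K d (t - s)
      = ∑ j ∈ Finset.range (2*d), ∑ j' ∈ Finset.range (2*d),
          ((Real.pi:ℂ) * Complex.I) * (e (((((d:ℤ) + j - j' : ℤ)):ℝ)*(t-s)) * e ((n:ℝ)*s)
            - e ((((-(d:ℤ) + j - j' : ℤ)):ℝ)*(t-s)) * e ((n:ℝ)*s)) := by
    intro s _
    unfold K Q
    simp only [Finset.mul_sum, Finset.sum_mul]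
    apply Finset.sum_congr rfl; intro j _
    apply Finset.sum_congr rfl; intro j' _
    have hA : e (((((d:ℤ) + j - j' : ℤ)):ℝ)*(t-s))
        = e ((d:ℝ)*(t-s)) * e (((((j:ℤ) - (j':ℤ)):ℤ):ℝ)*(t-s)) := by
      rw [← e_add]; congr 1; push_cast; ring
    have hB : e ((((-(d:ℤ) + j - j' : ℤ)):ℝ)*(t-s))
        = e ((-(d:ℝ))*(t-s)) * e (((((j:ℤ) - (j':ℤ)):ℤ):ℝ)*(t-s)) := by
      rw [← e_add]; congr 1; push_cast; ring
    rw [hA, hB]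
    push_cast
    ring
  rw [intervalIntegral.integral_congr hpt]
  have hintF : ∀ (m : ℤ), IntervalIntegrable
      (fun s => e ((m:ℝ)*(t-s)) * e ((n:ℝ)*s)) MeasureTheory.volume 0 1 :=
    fun m => ((continuous_shift _ t).mul (continuous_e _)).intervalIntegrable 0 1
  have cF : ∀ (j j' : ℕ), Continuous (fun s : ℝ =>
      ((Real.pi:ℂ) * Complex.I) * (e (((((d:ℤ) + j - j' : ℤ)):ℝ)*(t-s)) * e ((n:ℝ)*s)
        - e ((((-(d:ℤ) + j - j' : ℤ)):ℝ)*(t-s)) * e ((n:ℝ)*s))) := by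
    intro j j'
    exact continuous_const.mul (((continuous_shift _ t).mul (continuous_e _)).sub
      ((continuous_shift _ t).mul (continuous_e _)))
  rw [intervalIntegral.integral_finset_sum (fun j _ =>
    (continuous_finset_sum _ (fun j' _ => cF j j')).intervalIntegrable 0 1)]
  rw [show (∑ j ∈ Finset.range (2*d), ∫ s in (0:ℝ)..1, ∑ j' ∈ Finset.range (2*d),
        ((Real.pi:ℂ) * Complex.I) * (e (((((d:ℤ) + j - j' : ℤ)):ℝ)*(t-s)) * e ((n:ℝ)*s)
          - e ((((-(d:ℤ) + j - j' : ℤ)):ℝ)*(t-s)) * e ((n:ℝ)*s)))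
      = ∑ j ∈ Finset.range (2*d), ∑ j' ∈ Finset.range (2*d), ∫ s in (0:ℝ)..1,
        ((Real.pi:ℂ) * Complex.I) * (e (((((d:ℤ) + j - j' : ℤ)):ℝ)*(t-s)) * e ((n:ℝ)*s)
          - e ((((-(d:ℤ) + j - j' : ℤ)):ℝ)*(t-s)) * e ((n:ℝ)*s)) from
    Finset.sum_congr rfl (fun j _ => intervalIntegral.integral_finset_sum
      (fun j' _ => (cF j j').intervalIntegrable 0 1))]
  have hterm : ∀ j j' : ℕ, (∫ s in (0:ℝ)..1,
      ((Real.pi:ℂ) * Complex.I) * (e (((((d:ℤ) + j - j' : ℤ)):ℝ)*(t-s)) * e ((n:ℝ)*s)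
        - e ((((-(d:ℤ) + j - j' : ℤ)):ℝ)*(t-s)) * e ((n:ℝ)*s)))
      = ((Real.pi:ℂ) * Complex.I * e ((n:ℝ)*t)) *
        ((if ((j:ℤ) - (j':ℤ) = n - d) then (1:ℂ) else 0)
          - (if ((j:ℤ) - (j':ℤ) = n + d) then (1:ℂ) else 0)) := by
    intro j j'
    rw [intervalIntegral.integral_const_mul,
      intervalIntegral.integral_sub (hintF ((d:ℤ)+j-j')) (hintF (-(d:ℤ)+j-j')),
      delta_int n ((d:ℤ)+j-j') t, delta_int n (-(d:ℤ)+j-j') t]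
    have i1 : (n = (d:ℤ)+j-j') ↔ ((j:ℤ)-(j':ℤ) = n - d) := by omega
    have i2 : (n = -(d:ℤ)+j-j') ↔ ((j:ℤ)-(j':ℤ) = n + d) := by omega
    rw [if_congr i1 rfl rfl, if_congr i2 rfl rfl]
    ring
  rw [Finset.sum_congr rfl (fun j _ => Finset.sum_congr rfl (fun j' _ => hterm j j'))]
  simp only [← Finset.mul_sum]
  simp only [Finset.sum_sub_distrib]
  rw [aux_count (2*d) (n - d), aux_count (2*d) (n + d)]
  have c1 : ((((2*d:ℕ):ℤ) - |n - (d:ℤ)|).toNat : ℂ) = (d:ℂ) + n := by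
    have h : (((2*d:ℕ):ℤ) - |n - (d:ℤ)|).toNat = ((d:ℤ) + n).toNat := by
      rcases abs_cases (n - (d:ℤ)) with ⟨h1,h2⟩ | ⟨h1,h2⟩ <;> omega
    rw [h]
    have h2 := Int.toNat_of_nonneg (show (0:ℤ) ≤ (d:ℤ) + n by omega)
    exact_mod_cast congrArg (fun z : ℤ => (z:ℂ)) h2
  have c2 : ((((2*d:ℕ):ℤ) - |n + (d:ℤ)|).toNat : ℂ) = (d:ℂ) - n := by
    have h : (((2*d:ℕ):ℤ) - |n + (d:ℤ)|).toNat = ((d:ℤ) - n).toNat := by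
      rcases abs_cases (n + (d:ℤ)) with ⟨h1,h2⟩ | ⟨h1,h2⟩ <;> omega
    rw [h]
    have h2 := Int.toNat_of_nonneg (show (0:ℤ) ≤ (d:ℤ) - n by omega)
    exact_mod_cast congrArg (fun z : ℤ => (z:ℂ)) h2
  rw [c1, c2]
  ring

/-! ### Derivative -/

lemma hasDerivAt_e (c : ℝ) (t : ℝ) :
    HasDerivAt (fun t : ℝ => e (c * t)) (2 * Real.pi * Complex.I * c * e (c * t)) t := by
  have h1 : HasDerivAt (fun z : ℂ => Complex.exp (2 * Real.pi * Complex.I * c * z))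
      (2 * Real.pi * Complex.I * c * Complex.exp (2 * Real.pi * Complex.I * c * t)) (t : ℂ) := by
    simpa [mul_comm] using ((hasDerivAt_id (t:ℂ)).const_mul (2 * (Real.pi:ℂ) * Complex.I * c)).cexp
  have h2 := h1.comp_ofReal
  convert h2 using 2 <;> (unfold e; push_cast; ring_nf)

noncomputable def g (d : ℕ) (a : ℤ → ℂ) (t : ℝ) : ℂ :=
  ∑ n ∈ Finset.Icc (-(d:ℤ)) (d:ℤ), (2*Real.pi*Complex.I*(n:ℂ)) * a n * e ((n:ℝ)*t)

lemma continuous_g (d : ℕ) (a : ℤ → ℂ) : Continuous (g d a) := by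
  unfold g
  exact continuous_finset_sum _ (fun n _ => continuous_const.mul (continuous_e _))

section main
variable (d : ℕ) (a : ℤ → ℂ) (f : ℝ → ℂ)
  (hf : ∀ t : ℝ, f t = ∑ n ∈ Finset.Icc (-(d : ℤ)) (d : ℤ), a n * e ((n : ℝ) * t))

include hf

lemma continuous_f : Continuous f := by
  have : f = fun t => ∑ n ∈ Finset.Icc (-(d : ℤ)) (d : ℤ), a n * e ((n : ℝ) * t) := funext hf
  rw [this]
  exact continuous_finset_sum _ (fun n _ => continuous_const.mul (continuous_e _))

lemma hasDerivAt_f (t : ℝ) : HasDerivAt f (g d a t) t := by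
  have hfe : f = fun t => ∑ n ∈ Finset.Icc (-(d : ℤ)) (d : ℤ), a n * e ((n : ℝ) * t) := funext hf
  rw [hfe]
  unfold g
  apply HasDerivAt.fun_sum
  intro n _
  have h := (hasDerivAt_e (n:ℝ) t).const_mul (a n)
  exact h.congr_deriv (by push_cast; ring)

lemma conv_eq (t : ℝ) : g d a t = ∫ s in (0:ℝ)..1, f s * K d (t - s) := by
  have cK : Continuous (fun s : ℝ => K d (t - s)) :=
    (continuous_K d).comp (continuous_const.sub continuous_id)
  have h1 : (∫ s in (0:ℝ)..1, f s * K d (t-s))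
      = ∫ s in (0:ℝ)..1, ∑ n ∈ Finset.Icc (-(d:ℤ)) (d:ℤ),
          a n * (e ((n:ℝ)*s) * K d (t-s)) := by
    apply intervalIntegral.integral_congr
    intro s _
    dsimp only
    rw [hf s, Finset.sum_mul]
    exact Finset.sum_congr rfl (fun n _ => by ring)
  rw [h1, intervalIntegral.integral_finset_sum (f := fun n s => a n * (e ((n:ℝ)*s) * K d (t-s))) (fun n _ =>
    (continuous_const.mul ((continuous_e _).mul cK)).intervalIntegrable 0 1)]
  unfold g
  apply Finset.sum_congr rfl
  intro n hn
  rw [Finset.mem_Icc] at hn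
  rw [intervalIntegral.integral_const_mul, key d n hn.1 hn.2 t]
  ring

lemma L1_bound :
    (∫ t in (0:ℝ)..1, ‖g d a t‖) ≤ 4*Real.pi*d * ∫ t in (0:ℝ)..1, ‖f t‖ := by
  have cf : Continuous f := continuous_f d a f hf
  -- the inner bound function
  set H : ℝ → ℝ → ℝ := fun t s => ‖f s‖ * ‖K d (t-s)‖ with hH
  have cH : Continuous (Function.uncurry H) := by
    apply Continuous.mul
    · exact cf.norm.comp continuous_snd
    · exact (continuous_K d).norm.comp (continuous_fst.sub continuous_snd)
  have hpoint : ∀ t : ℝ, ‖g d a t‖ ≤ ∫ s in (0:ℝ)..1, H t s := by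
    intro t
    rw [conv_eq d a f hf t]
    refine le_trans (intervalIntegral.norm_integral_le_integral_norm (by norm_num)) ?_
    apply le_of_eq
    apply intervalIntegral.integral_congr
    intro s _
    dsimp only
    rw [norm_mul]
  have hcont_inner : Continuous (fun t => ∫ s in (0:ℝ)..1, H t s) :=
    intervalIntegral.continuous_parametric_intervalIntegral_of_continuous' cH 0 1
  have step1 : (∫ t in (0:ℝ)..1, ‖g d a t‖) ≤ ∫ t in (0:ℝ)..1, ∫ s in (0:ℝ)..1, H t s := by
    apply intervalIntegral.integral_mono_on (by norm_num)
      ((continuous_g d a).norm.intervalIntegrable 0 1)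
      (hcont_inner.intervalIntegrable 0 1)
    intro t _
    exact hpoint t
  refine le_trans step1 ?_
  -- Fubini
  have hIntProd : MeasureTheory.Integrable (Function.uncurry H)
      ((volume.restrict (Set.Ioc (0:ℝ) 1)).prod (volume.restrict (Set.Ioc (0:ℝ) 1))) := by
    rw [MeasureTheory.Measure.prod_restrict]
    have h1 : MeasureTheory.IntegrableOn (Function.uncurry H)
        (Set.Icc (0:ℝ) 1 ×ˢ Set.Icc (0:ℝ) 1) (volume.prod volume) := by
      apply ContinuousOn.integrableOn_compact (isCompact_Icc.prod isCompact_Icc)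
        cH.continuousOn
    exact h1.mono_set (Set.prod_mono Set.Ioc_subset_Icc_self Set.Ioc_subset_Icc_self)
  have hswap : (∫ t in Set.Ioc (0:ℝ) 1, ∫ s in Set.Ioc (0:ℝ) 1, H t s)
      = ∫ s in Set.Ioc (0:ℝ) 1, ∫ t in Set.Ioc (0:ℝ) 1, H t s :=
    MeasureTheory.integral_integral_swap hIntProd
  have conv1 : (∫ t in (0:ℝ)..1, ∫ s in (0:ℝ)..1, H t s)
      = ∫ t in Set.Ioc (0:ℝ) 1, ∫ s in Set.Ioc (0:ℝ) 1, H t s := by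
    rw [intervalIntegral.integral_of_le (by norm_num : (0:ℝ) ≤ 1)]
    apply MeasureTheory.setIntegral_congr_fun measurableSet_Ioc
    intro t _
    exact intervalIntegral.integral_of_le (by norm_num)
  -- inner integral over t is constant
  have hper : Function.Periodic (fun u => ‖K d u‖) 1 := by
    intro u; simp [K_periodic d u]
  have hKconst : ∀ s : ℝ, (∫ t in (0:ℝ)..1, ‖K d (t-s)‖) = ∫ u in (0:ℝ)..1, ‖K d u‖ := by
    intro s
    rw [intervalIntegral.integral_comp_sub_right (fun u => ‖K d u‖) s]
    rw [show (1:ℝ)-s = 0-s+1 by ring]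
    simpa using hper.intervalIntegral_add_eq (0-s) 0
  have hinner : ∀ s : ℝ, (∫ t in Set.Ioc (0:ℝ) 1, H t s)
      = ‖f s‖ * ∫ u in (0:ℝ)..1, ‖K d u‖ := by
    intro s
    rw [← intervalIntegral.integral_of_le (by norm_num : (0:ℝ) ≤ 1)]
    rw [hH]
    simp only []
    rw [intervalIntegral.integral_const_mul, hKconst s]
  rw [conv1, hswap]
  have : (∫ s in Set.Ioc (0:ℝ) 1, ∫ t in Set.Ioc (0:ℝ) 1, H t s)
      = ∫ s in Set.Ioc (0:ℝ) 1, ‖f s‖ * ∫ u in (0:ℝ)..1, ‖K d u‖ := by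
    apply MeasureTheory.setIntegral_congr_fun measurableSet_Ioc
    intro s _
    exact hinner s
  rw [this, ← intervalIntegral.integral_of_le (by norm_num : (0:ℝ) ≤ 1)]
  have hKnn : (0:ℝ) ≤ ∫ u in (0:ℝ)..1, ‖K d u‖ :=
    intervalIntegral.integral_nonneg (by norm_num) (fun u _ => norm_nonneg _)
  calc (∫ s in (0:ℝ)..1, ‖f s‖ * ∫ u in (0:ℝ)..1, ‖K d u‖)
      = (∫ s in (0:ℝ)..1, ‖f s‖) * ∫ u in (0:ℝ)..1, ‖K d u‖ := by
        rw [intervalIntegral.integral_mul_const]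
    _ ≤ (∫ s in (0:ℝ)..1, ‖f s‖) * (4*Real.pi*d) :=
        mul_le_mul_of_nonneg_left (integral_norm_K d)
          (intervalIntegral.integral_nonneg (by norm_num) (fun u _ => norm_nonneg _))
    _ = 4*Real.pi*d * ∫ s in (0:ℝ)..1, ‖f s‖ := mul_comm _ _

end main

/-- If `f` is a trigonometric polynomial of degree `d` and `N ≥ 8πd` is a positive integer,
then `(1/N) ∑_{m=1}^N |f((m−1)/N)| ≥ (1/2) ‖f‖_{L^1([0,1])}`. -/
theorem quadrature_lower_bound
    (d : ℕ) (a : ℤ → ℂ) (f : ℝ → ℂ)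
    (hf : ∀ t : ℝ, f t = ∑ n ∈ Finset.Icc (-(d : ℤ)) (d : ℤ), a n * e ((n : ℝ) * t))
    (N : ℕ) (hN : 0 < N) (hNd : 8 * Real.pi * (d : ℝ) ≤ (N : ℝ)) :
    (1 / (N : ℝ)) * ∑ m ∈ Finset.Icc 1 N, ‖f (((m : ℝ) - 1) / (N : ℝ))‖ ≥
      (1 / 2) * ∫ t in (0:ℝ)..1, ‖f t‖ := by
  have cf : Continuous f := continuous_f d a f hf
  have cg : Continuous (g d a) := continuous_g d a
  have hNpos : (0:ℝ) < N := by exact_mod_cast hN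
  set A := ∫ t in (0:ℝ)..1, ‖f t‖ with hA
  set B := ∫ t in (0:ℝ)..1, ‖g d a t‖ with hB
  set p : ℕ → ℝ := fun j => j / N with hp
  have hp0 : p 0 = 0 := by simp [hp]
  have hpN : p N = 1 := by simp [hp, hNpos.ne']
  have hmono : ∀ j : ℕ, p j ≤ p (j+1) := fun j => by
    rw [hp]
    apply (div_le_div_iff_of_pos_right hNpos).mpr
    push_cast; linarith
  have hstep : ∀ j : ℕ, p (j+1) - p j = 1/N := fun j => by
    rw [hp]; field_simp; simp
  have hsplitF : A = ∑ j ∈ Finset.range N, ∫ t in p j..p (j+1), ‖f t‖ := by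
    have h := intervalIntegral.sum_integral_adjacent_intervals
      (a := p) (n := N) (f := fun t => ‖f t‖) (μ := volume)
      (fun k _ => cf.norm.intervalIntegrable _ _)
    rw [hp0, hpN] at h
    rw [hA, ← h]
  have hsplitG : B = ∑ j ∈ Finset.range N, ∫ t in p j..p (j+1), ‖g d a t‖ := by
    have h := intervalIntegral.sum_integral_adjacent_intervals
      (a := p) (n := N) (f := fun t => ‖g d a t‖) (μ := volume)
      (fun k _ => cg.norm.intervalIntegrable _ _)
    rw [hp0, hpN] at h
    rw [hB, ← h]
  have hkey : ∀ j ∈ Finset.range N, (∫ t in p j..p (j+1), ‖f t‖)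
      ≤ (1/(N:ℝ)) * ‖f (p j)‖ + (1/(N:ℝ)) * (∫ t in p j..p (j+1), ‖g d a t‖) := by
    intro j _
    have hle : p j ≤ p (j+1) := hmono j
    set Cj := ∫ t in p j..p (j+1), ‖g d a t‖ with hCj
    have hpt : ∀ t ∈ Set.Icc (p j) (p (j+1)), ‖f t‖ ≤ ‖f (p j)‖ + Cj := by
      intro t ht
      obtain ⟨ht1, ht2⟩ := ht
      have hftc : (∫ x in (p j)..t, g d a x) = f t - f (p j) :=
        intervalIntegral.integral_eq_sub_of_hasDerivAt
          (fun x _ => hasDerivAt_f d a f hf x) (cg.intervalIntegrable _ _)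
      have h1 : ‖f t - f (p j)‖ ≤ ∫ x in (p j)..t, ‖g d a x‖ := by
        rw [← hftc]
        exact intervalIntegral.norm_integral_le_integral_norm ht1
      have h2 : (∫ x in (p j)..t, ‖g d a x‖) ≤ Cj := by
        apply intervalIntegral.integral_mono_interval le_rfl ht1 ht2
        · filter_upwards with x using norm_nonneg _
        · exact cg.norm.intervalIntegrable _ _
      calc ‖f t‖ = ‖f (p j) + (f t - f (p j))‖ := by ring_nf
        _ ≤ ‖f (p j)‖ + ‖f t - f (p j)‖ := norm_add_le _ _
        _ ≤ ‖f (p j)‖ + Cj := by linarith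
    have hm := intervalIntegral.integral_mono_on hle (cf.norm.intervalIntegrable _ _)
      (_root_.intervalIntegrable_const (μ := volume) (c := ‖f (p j)‖ + Cj)) hpt
    rw [intervalIntegral.integral_const, hstep j, smul_eq_mul] at hm
    calc (∫ t in p j..p (j+1), ‖f t‖) ≤ 1/(N:ℝ) * (‖f (p j)‖ + Cj) := hm
      _ = (1/(N:ℝ)) * ‖f (p j)‖ + (1/(N:ℝ)) * Cj := by ring
  have hsum : A ≤ (1/(N:ℝ)) * (∑ j ∈ Finset.range N, ‖f (p j)‖) + (1/(N:ℝ)) * B := by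
    rw [hsplitF]
    calc (∑ j ∈ Finset.range N, ∫ t in p j..p (j+1), ‖f t‖)
        ≤ ∑ j ∈ Finset.range N, ((1/(N:ℝ)) * ‖f (p j)‖
            + (1/(N:ℝ)) * (∫ t in p j..p (j+1), ‖g d a t‖)) := Finset.sum_le_sum hkey
      _ = (1/(N:ℝ)) * (∑ j ∈ Finset.range N, ‖f (p j)‖)
            + (1/(N:ℝ)) * ∑ j ∈ Finset.range N, ∫ t in p j..p (j+1), ‖g d a t‖ := by
          rw [Finset.sum_add_distrib, ← Finset.mul_sum, ← Finset.mul_sum]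
      _ = (1/(N:ℝ)) * (∑ j ∈ Finset.range N, ‖f (p j)‖) + (1/(N:ℝ)) * B := by
          rw [← hsplitG]
  have hBle : B ≤ 4*Real.pi*d*A := L1_bound d a f hf
  have hAnn : 0 ≤ A :=
    intervalIntegral.integral_nonneg (by norm_num) (fun _ _ => norm_nonneg _)
  have hreindex : (∑ m ∈ Finset.Icc 1 N, ‖f (((m:ℝ) - 1)/(N:ℝ))‖)
      = ∑ j ∈ Finset.range N, ‖f (p j)‖ := by
    apply Finset.sum_nbij' (i := fun m => m - 1) (j := fun j => j + 1)
    · intro m hm; rw [Finset.mem_Icc] at hm; rw [Finset.mem_range]; omega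
    · intro j hj; rw [Finset.mem_range] at hj; rw [Finset.mem_Icc]; omega
    · intro m hm; rw [Finset.mem_Icc] at hm; omega
    · intro j hj; omega
    · intro m hm
      rw [Finset.mem_Icc] at hm
      congr 2
      rw [hp]
      congr 1
      push_cast [Nat.cast_sub hm.1]
      ring
  have hfrac : (1/(N:ℝ))*B ≤ (1/2)*A := by
    have h1 : (1/(N:ℝ))*B ≤ (1/(N:ℝ))*(4*Real.pi*d*A) :=
      mul_le_mul_of_nonneg_left hBle (by positivity)
    have h3 : 4*Real.pi*(d:ℝ)/N ≤ 1/2 := by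
      rw [div_le_iff₀ hNpos]; linarith
    have h2 : (1/(N:ℝ))*(4*Real.pi*d*A) ≤ (1/2)*A := by
      calc (1/(N:ℝ))*(4*Real.pi*d*A) = (4*Real.pi*d/N)*A := by ring
        _ ≤ (1/2)*A := mul_le_mul_of_nonneg_right h3 hAnn
    linarith
  rw [ge_iff_le, hreindex]
  linarith
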